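/- Let 𝔉 be an iterated graph system satisfying Assumption (GR), p ∈ (1,∞), q = p/(p−1), m ∈ ℕ. Let L₁,L₂ ∈ ℒ^{(m)} be distinct and let F be a unit flow from L̃₁ to L̃₂ in G̃_m satisfying (FB2), i.e. F(v_L,v) = 0 whenever L ∈ ℒ^{(m)}, L ≠ L₁,L₂ and v ∈ L. Let α be a separative reflection symmetry of 𝔉 such that (1) {L₁,L₂} ∩ {α(L₁),α(L₂)} = ∅ and (2) L₁ ∪ α(L₂) ⊆ C_α^{(m)} ∪ (Δ_α)^m and L₂ ∪ α(L₁) ⊆ D_α^{(m)} ∪ (Δ_α)^m. Set 𝒱 = {v_L : L ∈ {L₁, α(L₂)} and v ∈ L}, let α(F)(x,y) := F(α⁻¹(x),α⁻¹(y)), and define T_α(F)(x,y) = F(x,y) if x,y ∈ (Δ_α)^m; T_α(F)(x,y) = F(x,y) + α(F)(x,y) if {x,y} ∩ (C_α^{(m)} ∪ 𝒱) ≠ ∅; and T_α(F)(x,y) = 0 otherwise. Then T_α(F) is a unit flow from L̃₁ to the set of added vertices of α(L₂) in G̃_m satisfying (FB2); moreover T_α(F)(v_{L₁},v) = F(v_{L₁},v)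 for all v ∈ L₁ and T_α(F)(v,v_{α(L₂)}) = α(F)(v,v_{α(L₂)}) for all v ∈ α(L₂); and E_q(T_α(F)) ≤ 2^q·E_q(F). -/

import Mathlib

namespace IGSP

/-- An iterated graph system: a finite connected oriented graph `G₁ = (S, E)`, a set of
types `T` with a surjective typing map on edges, and nonempty gluing rules `I_t ⊆ S × S`. -/
structure System (S T : Type) where
  E : S → S → Prop
  not_both : ∀ x y : S, E x y → ¬ E y x
  irrefl : ∀ x : S, ¬ E x x
  conn : ∀ x y : S, Relation.ReflTransGen (fun a b => E a b ∨ E b a) x y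
  typ : S → S → T
  typ_surj : ∀ t : T, ∃ x y, E x y ∧ typ x y = t
  glue : T → S → S → Prop
  glue_nonempty : ∀ t : T, ∃ x y, glue t x y

variable {S T : Type}

/-- Words of length `m` over the symbol set `S`. -/
abbrev Word (S : Type) (m : ℕ) := Fin m → S

open Classical in
/-- The replacement graphs together with their typing functions, defined by recursion on
the length of words: `G₁ = (S,E)` and an oriented edge `(w,v) ∈ E_{m+1}` holds iff either
the length-`m` prefixes agree and the last symbols form an edge of `G₁`, or the prefixes
form an edge of `E_m` and the last symbols belong to the gluing rule of its type. -/
noncomputable def replData [Nonempty T] (F : System S T) :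
    (L : ℕ) → (Word S L → Word S L → Prop) × (Word S L → Word S L → T)
  | 0 => ⟨fun _ _ => False, fun _ _ => Classical.arbitrary T⟩
  | 1 => ⟨fun w v => F.E (w 0) (v 0), fun w v => F.typ (w 0) (v 0)⟩
  | L + 2 =>
      ⟨fun w v =>
        (Fin.init w = Fin.init v ∧ F.E (w (Fin.last (L + 1))) (v (Fin.last (L + 1)))) ∨
        ((replData F (L + 1)).1 (Fin.init w) (Fin.init v) ∧
          F.glue ((replData F (L + 1)).2 (Fin.init w) (Fin.init v))
            (w (Fin.last (L + 1))) (v (Fin.last (L + 1)))),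
       fun w v =>
        if Fin.init w = Fin.init v then F.typ (w (Fin.last (L + 1))) (v (Fin.last (L + 1)))
        else (replData F (L + 1)).2 (Fin.init w) (Fin.init v)⟩

/-- The oriented edge relation of the replacement graph on words of length `L`. -/
def edge [Nonempty T] (F : System S T) (L : ℕ) (w v : Word S L) : Prop :=
  (replData F L).1 w v

/-- The typing function of the replacement graph on words of length `L`. -/
noncomputable def etyp [Nonempty T] (F : System S T) (L : ℕ) (w v : Word S L) : T :=
  (replData F L).2 w v

/-- The unoriented edge ("{w,v} ∈ E_L") relation. -/
def adjW [Nonempty T] (F : System S T) (L : ℕ) (w v : Word S L) : Prop :=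
  edge F L w v ∨ edge F L v w

/-- The replacement graph `G_L` as a simple graph on words of length `L`. -/
noncomputable def replGraph [Nonempty T] (F : System S T) (L : ℕ) : SimpleGraph (Word S L) where
  Adj w v := w ≠ v ∧ adjW F L w v
  symm := by
    constructor
    intro w v h
    exact ⟨Ne.symm h.1, Or.symm h.2⟩
  loopless := by
    constructor
    intro w h
    exact h.1 rfl

/-- The degree of a word `w` in the replacement graph `G_L`: the number of `v` with
`{w,v} ∈ E_L`. -/
noncomputable def degGm [Nonempty T] (F : System S T) (L : ℕ) (w : Word S L) : ℕ :=
  {v : Word S L | adjW F L w v}.ncard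

/-- `I_{t,+}`, the set of symbols occurring as the first coordinate of the gluing rule. -/
def Iplus (F : System S T) (t : T) : Set S := {a | ∃ b, F.glue t a b}

/-- `I_{t,-}`, the set of symbols occurring as the second coordinate of the gluing rule. -/
def Iminus (F : System S T) (t : T) : Set S := {b | ∃ a, F.glue t a b}

/-- `I_{t,★}` where the orientation `★` is encoded by a boolean: `true = +`, `false = -`. -/
def Iset (F : System S T) (t : T) : Bool → Set S
  | true => Iplus F t
  | false => Iminus F t

/-- `I_{t,★}^{(m)} = (I_{t,★})^m ⊆ W_m`. -/
def IsetW (F : System S T) (t : T) (b : Bool) (m : ℕ) : Set (Word S m) :=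
  {w | ∀ i, w i ∈ Iset F t b}

/-- The boundary `∂G_m = ⋃_{(t,★)} I_{t,★}^{(m)}`. -/
def boundaryW (F : System S T) (m : ℕ) : Set (Word S m) :=
  ⋃ (t : T) (b : Bool), IsetW F t b m

/-- (GR1): every symbol has at most one gluing partner for each type and orientation. -/
def GR1 (F : System S T) : Prop :=
  ∀ (t : T) (s : S), {b | F.glue t s b}.Subsingleton ∧ {a | F.glue t a s}.Subsingleton

/-- (GR2): for no type, orientation and symbol are the gluing-partner count and the
corresponding oriented degree in `G₁` simultaneously nonzero. -/
def GR2 (F : System S T) : Prop :=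
  ∀ (t : T) (s : S),
    ¬ ((∃ b, F.glue t s b) ∧ ∃ b, F.E s b ∧ F.typ s b = t) ∧
    ¬ ((∃ a, F.glue t a s) ∧ ∃ a, F.E a s ∧ F.typ a s = t)

/-- (GR3): `I_{t,-} ∩ I_{t,+} = ∅` for every type `t`. -/
def GR3 (F : System S T) : Prop := ∀ t : T, Iminus F t ∩ Iplus F t = ∅

/-- Assumption (GR). -/
def GR (F : System S T) : Prop := GR1 F ∧ GR2 F ∧ GR3 F

/-- A path in the replacement graph `G_L`: a nonempty list of words with consecutive
entries joined by an edge. -/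
def IsPath [Nonempty T] (F : System S T) (L : ℕ) (θ : List (Word S L)) : Prop :=
  θ ≠ [] ∧ θ.Chain' (adjW F L)

open Classical in
/-- The projection `π_{L,k}` of a path: take length-`k` prefixes and remove consecutive
repetitions. -/
noncomputable def proj {k L : ℕ} (h : k ≤ L) (θ : List (Word S L)) : List (Word S k) :=
  (θ.map fun w => fun i => w (Fin.castLE h i)).destutter (· ≠ ·)

/-- An intersection path in `G_{m+1}`: a path admitting a compatible sequence of paths at
all levels with uniformly bounded lengths. -/
def IsIntersectionPath [Nonempty T] (F : System S T) (m : ℕ) (θ : List (Word S (m + 1))) :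
    Prop :=
  IsPath F (m + 1) θ ∧
  ∃ Θ : (n : ℕ) → List (Word S (n + 1)),
    Θ m = θ ∧ (∀ n, IsPath F (n + 1) (Θ n)) ∧
    (∀ (k n : ℕ) (h : k ≤ n), proj (Nat.succ_le_succ h) (Θ n) = Θ k) ∧
    ∃ C : ℕ, ∀ n, (Θ n).length ≤ C

/-- The fundamental neighbourhood `𝒩(w)`. -/
def nbhd [Nonempty T] (F : System S T) (m : ℕ) (w : Word S (m + 1)) :
    Set (Word S (m + 1)) :=
  {v | ∃ θ, IsIntersectionPath F m θ ∧ θ.head? = some w ∧ θ.getLast? = some v}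

/-- Bounded geometry: the diameters of fundamental neighbourhoods are uniformly bounded. -/
def BoundedGeometry [Nonempty T] (F : System S T) : Prop :=
  ∃ D : ℕ, ∀ (m : ℕ) (w : Word S (m + 1)), ∀ v₁ ∈ nbhd F m w, ∀ v₂ ∈ nbhd F m w,
    (replGraph F (m + 1)).dist v₁ v₂ ≤ D

/-- `|w ∧ v| < L` for words of length `L`: the words differ at some index below the last. -/
def ncRel {L : ℕ} (w v : Word S L) : Prop := ∃ j : Fin L, (j : ℕ) + 1 < L ∧ w j ≠ v j

/-- A non-collapsing path: consecutive vertices satisfy `|w ∧ v| < L`. -/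
def NonCollapsing {L : ℕ} (θ : List (Word S L)) : Prop := θ.Chain' ncRel

/-- A mapping between iterated graph systems. -/
structure Hom {S T S' T' : Type} (F : System S T) (F' : System S' T') where
  toFun : S → S'
  map_edge : ∀ x y, (F.E x y ∨ F.E y x) →
    (toFun x = toFun y ∨ F'.E (toFun x) (toFun y) ∨ F'.E (toFun y) (toFun x))
  glue_collapse : ∀ w1 v1, F.E w1 v1 → toFun w1 = toFun v1 →
    ∀ w2 v2, F.glue (F.typ w1 v1) w2 v2 → toFun w2 = toFun v2
  glue_fwd : ∀ w1 v1, F.E w1 v1 → F'.E (toFun w1) (toFun v1) →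
    ∀ w2 v2, F.glue (F.typ w1 v1) w2 v2 →
      F'.glue (F'.typ (toFun w1) (toFun v1)) (toFun w2) (toFun v2)
  glue_rev : ∀ w1 v1, F.E w1 v1 → F'.E (toFun v1) (toFun w1) →
    ∀ w2 v2, F.glue (F.typ w1 v1) w2 v2 →
      F'.glue (F'.typ (toFun v1) (toFun w1)) (toFun v2) (toFun w2)

/-- An isomorphism between iterated graph systems: a pair of mutually inverse mappings. -/
structure Iso {S T S' T' : Type} (F : System S T) (F' : System S' T') where
  hom : Hom F F'
  inv : Hom F' F
  left_inv : ∀ x, inv.toFun (hom.toFun x) = x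
  right_inv : ∀ y, hom.toFun (inv.toFun y) = y

/-- A flipping symmetry of type `t`. -/
def IsFlip (F : System S T) (t : T) (η : Iso F F) : Prop :=
  (∀ w ∈ Iplus F t, F.glue t w (η.hom.toFun w)) ∧
  (∀ v ∈ Iminus F t, F.glue t (η.hom.toFun v) v)

/-- The data of a reflection symmetry of an iterated graph system: an involutive
isomorphism together with the partition `S = C ∪ D ∪ Δ` satisfying (D1)-(D4). -/
structure ReflData (F : System S T) where
  iso : Iso F F
  C : Set S
  D : Set S
  invol : ∀ x, iso.hom.toFun (iso.hom.toFun x) = x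
  C_not_fixed : ∀ x ∈ C, iso.hom.toFun x ≠ x
  D_not_fixed : ∀ x ∈ D, iso.hom.toFun x ≠ x
  CD_disjoint : ∀ x, ¬ (x ∈ C ∧ x ∈ D)
  cover : ∀ x, x ∈ C ∨ x ∈ D ∨ iso.hom.toFun x = x
  image_C : iso.hom.toFun '' C = D
  edge_CD : ∀ x ∈ C, ∀ y ∈ D, (F.E x y ∨ F.E y x) → iso.hom.toFun x = y
  D2 : ∀ w1 v1, F.E w1 v1 → iso.hom.toFun v1 = v1 →
    (w1 ∈ C → Iminus F (F.typ w1 v1) ⊆ C ∪ {x | iso.hom.toFun x = x}) ∧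
    (w1 ∈ D → Iminus F (F.typ w1 v1) ⊆ D ∪ {x | iso.hom.toFun x = x})
  D3 : ∀ w1 v1, F.E w1 v1 → iso.hom.toFun w1 = w1 →
    (v1 ∈ C → Iplus F (F.typ w1 v1) ⊆ C ∪ {x | iso.hom.toFun x = x}) ∧
    (v1 ∈ D → Iplus F (F.typ w1 v1) ⊆ D ∪ {x | iso.hom.toFun x = x})
  D4 : ∀ w1 v1, F.E w1 v1 → iso.hom.toFun w1 = w1 → iso.hom.toFun v1 = v1 →
    ∀ w2 v2, F.glue (F.typ w1 v1) w2 v2 →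
      (w2 ∈ C ∧ v2 ∈ C) ∨ (w2 ∈ D ∧ v2 ∈ D) ∨
      (iso.hom.toFun w2 = w2 ∧ iso.hom.toFun v2 = v2)

/-- (D5): a reflection symmetry. -/
def IsRefl {F : System S T} (R : ReflData F) : Prop :=
  ∀ w1 v1, F.E w1 v1 → w1 ∈ R.C → v1 ∈ R.D →
    ∀ w2 v2, F.glue (F.typ w1 v1) w2 v2 → R.iso.hom.toFun w2 = v2

/-- (D5*): a separative reflection symmetry. -/
def IsSepRefl {F : System S T} (R : ReflData F) : Prop :=
  ∀ x ∈ R.C, ∀ y ∈ R.D, ¬ (F.E x y ∨ F.E y x)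

/-- The coordinatewise action of a reflection symmetry on words. -/
def wordMap {F : System S T} (R : ReflData F) {m : ℕ} (w : Word S m) : Word S m :=
  fun i => R.iso.hom.toFun (w i)

/-- The lifted set `C_α^{(m)}`: words whose first non-fixed coordinate lies in `C`. -/
def liftC {F : System S T} (R : ReflData F) (m : ℕ) : Set (Word S m) :=
  {w | ∃ k : Fin m, w k ∈ R.C ∧ ∀ j < k, R.iso.hom.toFun (w j) = w j}

/-- The lifted set `D_α^{(m)}`: words whose first non-fixed coordinate lies in `D`. -/
def liftD {F : System S T} (R : ReflData F) (m : ℕ) : Set (Word S m) :=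
  {w | ∃ k : Fin m, w k ∈ R.D ∧ ∀ j < k, R.iso.hom.toFun (w j) = w j}

end IGSP
namespace IGSP

variable {S T : Type}

/-- An antisymmetric function supported on the edges of a graph. -/
def Antisym {V : Type} (G : SimpleGraph V) (Φ : V → V → ℝ) : Prop :=
  (∀ x y, Φ x y = - Φ y x) ∧ ∀ x y, ¬ G.Adj x y → Φ x y = 0

/-- The divergence of `Φ` at a vertex. -/
noncomputable def fdiv {V : Type} (Φ : V → V → ℝ) (x : V) : ℝ := ∑ᶠ y, Φ x y

/-- A flow from `A` to `B`. -/
def IsFlow {V : Type} (G : SimpleGraph V) (A B : Set V) (Φ : V → V → ℝ) : Prop :=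
  Antisym G Φ ∧ ∀ x, x ∉ A ∪ B → fdiv Φ x = 0

/-- The total flow `I(Φ) = Σ_{x ∈ A} div Φ (x)`. -/
noncomputable def totalFlow {V : Type} (A : Set V) (Φ : V → V → ℝ) : ℝ :=
  ∑ᶠ x ∈ A, fdiv Φ x

/-- The `q`-energy `E_q(Φ) = Σ_{{x,y} ∈ E} |Φ(x,y)|^q` (each unordered edge counted once). -/
noncomputable def energy {V : Type} (q : ℝ) (Φ : V → V → ℝ) : ℝ :=
  (∑ᶠ x, ∑ᶠ y, |Φ x y| ^ q) / 2

/-- The degree of a vertex of a graph. -/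
noncomputable def degOf {V : Type} (G : SimpleGraph V) (x : V) : ℕ := {y | G.Adj x y}.ncard

/-- The maximal degree of a finite graph. -/
noncomputable def maxDeg {V : Type} [Fintype V] (G : SimpleGraph V) : ℕ :=
  Finset.univ.sup fun x => degOf G x

/-- The diameter of a finite graph (in the shortest-path metric). -/
noncomputable def gdiam {V : Type} [Fintype V] (G : SimpleGraph V) : ℕ :=
  Finset.univ.sup fun pr : V × V => G.dist pr.1 pr.2

/-- The set of vertices of a path. -/
def pathVerts {V : Type} (θ : List V) : Set V := {x | x ∈ θ}

/-- A density is admissible for a path family if it is nonnegative and its sum along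
every path of the family is at least 1. -/
def Admissible {V : Type} (Θ : Set (List V)) (ρ : V → ℝ) : Prop :=
  (∀ x, 0 ≤ ρ x) ∧ ∀ θ ∈ Θ, 1 ≤ ∑ᶠ x ∈ pathVerts θ, ρ x

/-- The discrete (vertex) `p`-modulus of a family of paths. -/
noncomputable def modulus {V : Type} (p : ℝ) (Θ : Set (List V)) : ℝ :=
  sInf {M | ∃ ρ : V → ℝ, Admissible Θ ρ ∧ M = ∑ᶠ x, ρ x ^ p}

/-- The `p`-resistance `E_q(A,B,G)`: infimal `q`-energy of unit flows from `A` to `B`. -/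
noncomputable def resistance {V : Type} (q : ℝ) (G : SimpleGraph V) (A B : Set V) : ℝ :=
  sInf {e | ∃ Φ, IsFlow G A B Φ ∧ totalFlow A Φ = 1 ∧ e = energy q Φ}

/-- The family `Θ_𝔞^{(m)}` of paths in `G_m` from `I_{t₁,★₁}^{(m)}` to `I_{t₂,★₂}^{(m)}`. -/
def ThetaIGS [Nonempty T] (F : System S T) (m : ℕ) (t₁ : T) (b₁ : Bool) (t₂ : T)
    (b₂ : Bool) : Set (List (Word S m)) :=
  {θ | IsPath F m θ ∧ (∃ w ∈ IsetW F t₁ b₁ m, θ.head? = some w) ∧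
    ∃ v ∈ IsetW F t₂ b₂ m, θ.getLast? = some v}

/-- `ℒ^{(m)}`, the collection of sets `I_{t,★}^{(m)}`. -/
def scriptL [Nonempty T] (F : System S T) (m : ℕ) : Set (Set (Word S m)) :=
  {A | ∃ (t : T) (b : Bool), A = IsetW F t b m}

/-- The added vertices `v_L` (for `L ∈ ℒ^{(m)}` and `v ∈ L`) of the graph `G̃_m`. -/
def AddedV [Nonempty T] (F : System S T) (m : ℕ) :=
  {pr : Set (Word S m) × Word S m // pr.1 ∈ scriptL F m ∧ pr.2 ∈ pr.1}

/-- The vertex set of the graph `G̃_m`. -/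
def TildeV [Nonempty T] (F : System S T) (m : ℕ) := Word S m ⊕ AddedV F m

/-- The graph `G̃_m`, obtained from `G_m` by attaching a pendant vertex `v_L` at every
`v ∈ L` for every `L ∈ ℒ^{(m)}`. -/
noncomputable def tildeG [Nonempty T] (F : System S T) (m : ℕ) : SimpleGraph (TildeV F m) where
  Adj x y :=
    match x, y with
    | Sum.inl w, Sum.inl v => w ≠ v ∧ adjW F m w v
    | Sum.inl w, Sum.inr pr => pr.1.2 = w
    | Sum.inr pr, Sum.inl w => pr.1.2 = w
    | Sum.inr _, Sum.inr _ => False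
  symm := by
    constructor
    rintro (w | pr) (v | qr) h
    · exact ⟨Ne.symm h.1, Or.symm h.2⟩
    · exact h
    · exact h
    · exact h.elim
  loopless := by
    constructor
    rintro (w | pr) h
    · exact h.1 rfl
    · exact h

/-- The set `L̃ = {v_L : v ∈ L}` of added vertices over `L`. -/
def tildeSet [Nonempty T] (F : System S T) (m : ℕ) (L : Set (Word S m)) :
    Set (TildeV F m) :=
  {x | ∃ pr : AddedV F m, pr.1.1 = L ∧ x = Sum.inr pr}

/-- A flow basis on `G̃_m`: a family of unit flows between the added vertex sets of all
pairs of distinct members of `ℒ^{(m)}`, satisfying (FB1)–(FB4). -/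
structure FlowBasis [Nonempty T] (F : System S T) (ηfam : T → Iso F F) (m : ℕ) where
  flow : (L₁ L₂ : Set (Word S m)) → L₁ ∈ scriptL F m → L₂ ∈ scriptL F m → L₁ ≠ L₂ →
    TildeV F m → TildeV F m → ℝ
  flow_isFlow : ∀ (L₁ L₂ : Set (Word S m)) (h₁ : L₁ ∈ scriptL F m) (h₂ : L₂ ∈ scriptL F m)
    (hne : L₁ ≠ L₂),
    IsFlow (tildeG F m) (tildeSet F m L₁) (tildeSet F m L₂) (flow L₁ L₂ h₁ h₂ hne)
  flow_unit : ∀ (L₁ L₂ : Set (Word S m)) (h₁ : L₁ ∈ scriptL F m) (h₂ : L₂ ∈ scriptL F m)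
    (hne : L₁ ≠ L₂), totalFlow (tildeSet F m L₁) (flow L₁ L₂ h₁ h₂ hne) = 1
  fb2 : ∀ (L₁ L₂ : Set (Word S m)) (h₁ : L₁ ∈ scriptL F m) (h₂ : L₂ ∈ scriptL F m)
    (hne : L₁ ≠ L₂) (pr : AddedV F m), pr.1.1 ≠ L₁ → pr.1.1 ≠ L₂ →
    flow L₁ L₂ h₁ h₂ hne (Sum.inr pr) (Sum.inl pr.1.2) = 0
  fb3_out : ∀ (L L₁ L₂ : Set (Word S m)) (hL : L ∈ scriptL F m) (h₁ : L₁ ∈ scriptL F m)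
    (h₂ : L₂ ∈ scriptL F m) (hne₁ : L ≠ L₁) (hne₂ : L ≠ L₂) (pr : AddedV F m),
    pr.1.1 = L →
    flow L L₁ hL h₁ hne₁ (Sum.inr pr) (Sum.inl pr.1.2) =
      flow L L₂ hL h₂ hne₂ (Sum.inr pr) (Sum.inl pr.1.2)
  fb3_in : ∀ (L L₁ L₂ : Set (Word S m)) (hL : L ∈ scriptL F m) (h₁ : L₁ ∈ scriptL F m)
    (h₂ : L₂ ∈ scriptL F m) (hne₁ : L₁ ≠ L) (hne₂ : L₂ ≠ L) (pr : AddedV F m),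
    pr.1.1 = L →
    flow L₁ L h₁ hL hne₁ (Sum.inl pr.1.2) (Sum.inr pr) =
      flow L₂ L h₂ hL hne₂ (Sum.inl pr.1.2) (Sum.inr pr)
  fb4_flip : ∀ (t : T) (b : Bool) (h₁ : IsetW F t b m ∈ scriptL F m)
    (h₂ : IsetW F t (!b) m ∈ scriptL F m) (hne : IsetW F t b m ≠ IsetW F t (!b) m)
    (pr qr : AddedV F m), pr.1.1 = IsetW F t b m → qr.1.1 = IsetW F t (!b) m →
    qr.1.2 = (fun i => (ηfam t).hom.toFun (pr.1.2 i)) →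
    flow (IsetW F t b m) (IsetW F t (!b) m) h₁ h₂ hne (Sum.inr pr) (Sum.inl pr.1.2) =
      flow (IsetW F t b m) (IsetW F t (!b) m) h₁ h₂ hne (Sum.inl qr.1.2) (Sum.inr qr)
  fb4_sym : ∀ (t : T) (b : Bool) (h₁ : IsetW F t b m ∈ scriptL F m)
    (h₂ : IsetW F t (!b) m ∈ scriptL F m) (hne : IsetW F t b m ≠ IsetW F t (!b) m)
    (hne' : IsetW F t (!b) m ≠ IsetW F t b m) (pr : AddedV F m),
    pr.1.1 = IsetW F t b m →
    flow (IsetW F t b m) (IsetW F t (!b) m) h₁ h₂ hne (Sum.inr pr) (Sum.inl pr.1.2) =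
      flow (IsetW F t (!b) m) (IsetW F t b m) h₂ h₁ hne' (Sum.inl pr.1.2) (Sum.inr pr)

/-- The `q`-energy of a flow basis: the maximal energy of its members. -/
noncomputable def basisEnergy [Nonempty T] {F : System S T} {ηfam : T → Iso F F} {m : ℕ}
    (q : ℝ) (FB : FlowBasis F ηfam m) : ℝ :=
  sSup {e | ∃ (L₁ L₂ : Set (Word S m)) (h₁ : L₁ ∈ scriptL F m) (h₂ : L₂ ∈ scriptL F m)
    (hne : L₁ ≠ L₂), e = energy q (FB.flow L₁ L₂ h₁ h₂ hne)}

open Classical in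
/-- The twisted flow `T_α(F)` of Proposition "Twist flow". -/
noncomputable def Talpha [Nonempty T] {F : System S T} {m : ℕ} (R : ReflData F)
    (L₁ L₂' : Set (Word S m)) (A : TildeV F m ≃ TildeV F m)
    (Φ : TildeV F m → TildeV F m → ℝ) : TildeV F m → TildeV F m → ℝ := fun x y =>
  if (∃ w, x = Sum.inl w ∧ wordMap R w = w) ∧ (∃ w, y = Sum.inl w ∧ wordMap R w = w) then
    Φ x y
  else if ((∃ w, x = Sum.inl w ∧ w ∈ liftC R m) ∨
        (∃ pr : AddedV F m, x = Sum.inr pr ∧ (pr.1.1 = L₁ ∨ pr.1.1 = L₂'))) ∨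
      ((∃ w, y = Sum.inl w ∧ w ∈ liftC R m) ∨
        (∃ pr : AddedV F m, y = Sum.inr pr ∧ (pr.1.1 = L₁ ∨ pr.1.1 = L₂'))) then
    Φ x y + Φ (A.symm x) (A.symm y)
  else 0

end IGSP
namespace IGSP

/-- The symbol set of the ambient cubical system: `{1,…,L}^d × {1,…,s}` (0-indexed). -/
abbrev CSym (d L s : ℕ) := (Fin d → Fin L) × Fin s

/-- The ambient edge relation of type `t_j`. -/
def ambE {d L s : ℕ} (j : Fin d) (w v : CSym d L s) : Prop :=
  (∀ i, i ≠ j → w.1 i = v.1 i) ∧ (v.1 j : ℕ) = (w.1 j : ℕ) + 1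

/-- The ambient gluing rule of type `t_j`. -/
def ambI {d L s : ℕ} (j : Fin d) (w v : CSym d L s) : Prop :=
  (∀ i, i ≠ j → w.1 i = v.1 i) ∧ (w.1 j : ℕ) = L - 1 ∧ (v.1 j : ℕ) = 0 ∧ w.2 = v.2

/-- A symbol lying on the `j`-axis edge of the cube: all other coordinates extremal
and label `1`. -/
def onAxis {d L s : ℕ} (j : Fin d) (w : CSym d L s) : Prop :=
  (∀ i, i ≠ j → ((w.1 i : ℕ) = 0 ∨ (w.1 i : ℕ) = L - 1)) ∧ (w.2 : ℕ) = 0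

/-- The coordinate reflection `η_j : c_j ↦ L + 1 - c_j`. -/
def etaMap {d L s : ℕ} (j : Fin d) (w : CSym d L s) : CSym d L s :=
  ⟨fun i => if i = j then ⟨L - 1 - (w.1 j : ℕ), by have := (w.1 j).isLt; omega⟩ else w.1 i,
    w.2⟩

/-- The diagonal reflection `α_{j,k}^+` exchanging coordinates `j` and `k`. -/
def swapMap {d L s : ℕ} (j k : Fin d) (w : CSym d L s) : CSym d L s :=
  ⟨fun i => if i = j then w.1 k else if i = k then w.1 j else w.1 i, w.2⟩

/-- The anti-diagonal reflection `α_{j,k}^-`. -/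
def aswapMap {d L s : ℕ} (j k : Fin d) (w : CSym d L s) : CSym d L s :=
  ⟨fun i =>
    if i = j then ⟨L - 1 - (w.1 k : ℕ), by have := (w.1 k).isLt; omega⟩
    else if i = k then ⟨L - 1 - (w.1 j : ℕ), by have := (w.1 j).isLt; omega⟩
    else w.1 i, w.2⟩

/-- A cubical iterated graph system: a sub-system of the ambient system `𝔉(d,L,s)`
satisfying the conditions (C1)–(C4). -/
structure CubicalIGS (d L s : ℕ) where
  hd : 1 ≤ d
  hL : 3 ≤ L
  hs : 1 ≤ s
  Symb : Set (CSym d L s)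
  sys : System (↥Symb) (Fin d)
  edge_amb : ∀ x y : ↥Symb, sys.E x y → ambE (sys.typ x y) x.1 y.1
  glue_amb : ∀ (j : Fin d) (x y : ↥Symb), sys.glue j x y → ambI j x.1 y.1
  C1 : ∀ w : CSym d L s, (∃ j, onAxis j w) → w ∈ Symb
  C2 : ∀ (j : Fin d) (x y : ↥Symb), onAxis j x.1 → onAxis j y.1 → ambE j x.1 y.1 →
    sys.E x y
  C3 : ∀ (j : Fin d) (x y : ↥Symb), onAxis j x.1 → onAxis j y.1 → ambI j x.1 y.1 →
    sys.glue j x y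
  C4_eta : ∀ j : Fin d, ∃ ψ : Iso sys sys,
    ∀ x : ↥Symb, (ψ.hom.toFun x : CSym d L s) = etaMap j x.1
  C4_plus : ∀ j k : Fin d, j ≠ k → ∃ ψ : Iso sys sys,
    ∀ x : ↥Symb, (ψ.hom.toFun x : CSym d L s) = swapMap j k x.1
  C4_minus : ∀ j k : Fin d, j ≠ k → ∃ ψ : Iso sys sys,
    ∀ x : ↥Symb, (ψ.hom.toFun x : CSym d L s) = aswapMap j k x.1

/-- The corner symbol `𝐤`: first coordinate `k`, all other coordinates `1`, label `1`. -/
def cornerSym {d L s : ℕ} (cub : CubicalIGS d L s) (k : Fin L) : ↥cub.Symb :=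
  ⟨⟨fun i => if (i : ℕ) = 0 then k else ⟨0, by have := k.isLt; omega⟩,
      ⟨0, by have := cub.hs; omega⟩⟩, by
    apply cub.C1
    refine ⟨⟨0, cub.hd⟩, fun i hi => ?_, rfl⟩
    have hiv : (i : ℕ) ≠ 0 := fun h => hi (Fin.ext h)
    left
    simp [hiv]⟩

end IGSP
namespace IGSP

/-- The edge relation of the Sierpiński gasket IGS. -/
abbrev gasketE (x y : Fin 3) : Prop :=
  (x = 0 ∧ y = 1) ∨ (x = 1 ∧ y = 2) ∨ (x = 0 ∧ y = 2)

/-- The Sierpiński gasket iterated graph system. -/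
noncomputable def gasket : System (Fin 3) (Fin 3) where
  E := gasketE
  not_both := by decide
  irrefl := by decide
  conn := by
    have hadj : ∀ a b : Fin 3, a ≠ b → gasketE a b ∨ gasketE b a := by decide
    intro x y
    rcases eq_or_ne x y with rfl | h
    · exact Relation.ReflTransGen.refl
    · exact Relation.ReflTransGen.single (hadj x y h)
  typ := fun x y => if x = 0 ∧ y = 1 then 0 else if x = 1 ∧ y = 2 then 1 else 2
  typ_surj := by decide
  glue := fun t x y =>
    (t = 0 ∧ x = 1 ∧ y = 0) ∨ (t = 1 ∧ x = 2 ∧ y = 1) ∨ (t = 2 ∧ x = 2 ∧ y = 0)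
  glue_nonempty := by decide

open Fin.NatCast Fin.CommRing in
/-- The pentagonal Sierpiński carpet iterated graph system. -/
noncomputable def pentagon : System (Fin 5) (Fin 5) where
  E := fun x y => y = x + 1
  not_both := by decide
  irrefl := by decide
  conn := by
    intro x y
    have key : ∀ (k : ℕ) (z : Fin 5),
        Relation.ReflTransGen (fun a b : Fin 5 => b = a + 1 ∨ a = b + 1) z (z + (k : Fin 5)) := by
      intro k
      induction k with
      | zero => intro z; simpa using Relation.ReflTransGen.refl
      | succ n ih =>
          intro z
          have h : ((n + 1 : ℕ) : Fin 5) = ((n : ℕ) : Fin 5) + 1 := by push_cast; ring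
          rw [h, ← add_assoc]
          exact (ih z).tail (Or.inl rfl)
    have h2 := key ((y - x : Fin 5) : ℕ) x
    rw [Fin.cast_val_eq_self] at h2
    have h3 : x + (y - x) = y := by abel
    rwa [h3] at h2
  typ := fun x _ => x
  typ_surj := fun t => ⟨t, t + 1, rfl, rfl⟩
  glue := fun t x y => (x = t + 1 ∧ y = t) ∨ (x = t + 2 ∧ y = t + 4)
  glue_nonempty := fun t => ⟨t + 1, t, Or.inl ⟨rfl, rfl⟩⟩

/-- The interval iterated graph system `𝔉(1, L)`. -/
noncomputable def intervalSys (L : ℕ) (hL : 3 ≤ L) : System (Fin L) Unit where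
  E x y := (y : ℕ) = (x : ℕ) + 1
  not_both := by intro x y h h'; omega
  irrefl := by intro x h; omega
  conn := by
    have key : ∀ (k : ℕ) (hk : k < L),
        Relation.ReflTransGen (fun a b : Fin L => ((b : ℕ) = (a : ℕ) + 1) ∨ ((a : ℕ) = (b : ℕ) + 1))
          ⟨0, by omega⟩ ⟨k, hk⟩ := by
      intro k
      induction k with
      | zero => intro hk; exact Relation.ReflTransGen.refl
      | succ n ih =>
          intro hk
          exact Relation.ReflTransGen.tail (ih (by omega)) (Or.inl rfl)
    intro x y
    have hsymm : Symmetric fun a b : Fin L => ((b : ℕ) = (a : ℕ) + 1) ∨ ((a : ℕ) = (b : ℕ) + 1) :=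
      fun a b h => h.symm
    have hsymm' : Std.Symm fun a b : Fin L => ((b : ℕ) = (a : ℕ) + 1) ∨ ((a : ℕ) = (b : ℕ) + 1) :=
      ⟨hsymm⟩
    have hx := key x.val x.isLt
    have hy := key y.val y.isLt
    simp only [Fin.eta] at hx hy
    exact Relation.ReflTransGen.trans (Std.Symm.symm _ _ hx) hy
  typ := fun _ _ => ()
  typ_surj := by
    intro t
    refine ⟨⟨0, by omega⟩, ⟨1, by omega⟩, rfl, ?_⟩
    cases t; rfl
  glue := fun _ x y => (x : ℕ) = L - 1 ∧ (y : ℕ) = 0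
  glue_nonempty := fun _ => ⟨⟨L - 1, by omega⟩, ⟨0, by omega⟩, rfl, rfl⟩

variable {S T : Type}

/-- A folding of `G_{k+n}` onto `w̃ · W_n`: a graph mapping into the induced subgraph on
`w̃ · W_n` which fixes `w̃ · W_n` pointwise. -/
def HasFolding [Nonempty T] (F : System S T) (k n : ℕ) (wt : Word S k) : Prop :=
  ∃ f : Word S (k + n) → Word S (k + n),
    (∀ x, ∃ u : Word S n, f x = Fin.append wt u) ∧
    (∀ u : Word S n, f (Fin.append wt u) = Fin.append wt u) ∧
    (∀ x y, adjW F (k + n) x y → f x = f y ∨ adjW F (k + n) (f x) (f y))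

end IGSP

set_option linter.unusedSectionVars false
set_option linter.dupNamespace false
set_option maxHeartbeats 1000000
namespace IGSP
variable {S T : Type} [Nonempty T] {F : System S T}

lemma edge_zero (w v : Word S 0) : ¬ edge F 0 w v := by
  simp [edge, replData]

lemma edge_one (w v : Word S 1) : edge F 1 w v ↔ F.E (w 0) (v 0) := by
  simp [edge, replData]

lemma etyp_one (w v : Word S 1) : etyp F 1 w v = F.typ (w 0) (v 0) := by
  rw [etyp, replData]

lemma edge_two (L : ℕ) (w v : Word S (L+2)) : edge F (L+2) w v ↔
    (Fin.init w = Fin.init v ∧ F.E (w (Fin.last (L + 1))) (v (Fin.last (L + 1)))) ∨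
    (edge F (L+1) (Fin.init w) (Fin.init v) ∧
      F.glue (etyp F (L+1) (Fin.init w) (Fin.init v))
        (w (Fin.last (L + 1))) (v (Fin.last (L + 1)))) := by
  rw [edge, replData]; rfl

open Classical in
lemma etyp_two (L : ℕ) (w v : Word S (L+2)) : etyp F (L+2) w v =
    if Fin.init w = Fin.init v then F.typ (w (Fin.last (L + 1))) (v (Fin.last (L + 1)))
    else etyp F (L+1) (Fin.init w) (Fin.init v) := by
  rw [etyp, replData]; rfl

lemma edge_ne : ∀ (L : ℕ) (w v : Word S L), edge F L w v → w ≠ v := by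
  intro L
  induction L using Nat.strong_induction_on with
  | _ L ih =>
    match L with
    | 0 => exact fun w v h => absurd h (edge_zero w v)
    | 1 =>
      rintro w v h rfl
      exact F.irrefl _ ((edge_one w w).mp h)
    | (L+2) =>
      rintro w v h rfl
      rcases (edge_two L w w).mp h with ⟨_, hE⟩ | ⟨hE, _⟩
      · exact F.irrefl _ hE
      · exact ih (L+1) (by omega) _ _ hE rfl

variable (R : ReflData F)

lemma fixw_iff {m : ℕ} (w : Word S m) :
    wordMap R w = w ↔ ∀ i, R.iso.hom.toFun (w i) = w i := by
  constructor
  · intro h i; exact congrFun h i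
  · intro h; funext i; exact h i

lemma word_cover {m : ℕ} (w : Word S m) :
    w ∈ liftC R m ∨ w ∈ liftD R m ∨ wordMap R w = w := by
  classical
  by_cases hall : ∀ i, R.iso.hom.toFun (w i) = w i
  · exact Or.inr (Or.inr ((fixw_iff R w).mpr hall))
  · push_neg at hall
    obtain ⟨i0, hi0⟩ := hall
    have hP : ∃ n, ∃ h : n < m, R.iso.hom.toFun (w ⟨n, h⟩) ≠ w ⟨n, h⟩ :=
      ⟨i0.1, i0.2, by simpa using hi0⟩
    classical
    let k := Nat.find hP
    obtain ⟨hk, hkne⟩ := Nat.find_spec hP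
    have hmin : ∀ (j : Fin m), (j : ℕ) < k → R.iso.hom.toFun (w j) = w j := by
      intro j hj
      by_contra hne
      exact Nat.find_min hP hj ⟨j.2, by simpa using hne⟩
    rcases R.cover (w ⟨k, hk⟩) with hc | hd | hf
    · exact Or.inl ⟨⟨k, hk⟩, hc, fun j hj => hmin j hj⟩
    · exact Or.inr (Or.inl ⟨⟨k, hk⟩, hd, fun j hj => hmin j hj⟩)
    · exact absurd hf hkne

lemma liftC_not_fix {m : ℕ} {w : Word S m} (h : w ∈ liftC R m) : wordMap R w ≠ w := by
  obtain ⟨k, hk, -⟩ := h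
  intro hfix
  exact R.C_not_fixed _ hk (congrFun hfix k)

lemma liftD_not_fix {m : ℕ} {w : Word S m} (h : w ∈ liftD R m) : wordMap R w ≠ w := by
  obtain ⟨k, hk, -⟩ := h
  intro hfix
  exact R.D_not_fixed _ hk (congrFun hfix k)

lemma liftC_liftD_disj {m : ℕ} {w : Word S m} (hC : w ∈ liftC R m) (hD : w ∈ liftD R m) :
    False := by
  obtain ⟨k, hk, hbk⟩ := hC
  obtain ⟨l, hl, hbl⟩ := hD
  rcases lt_trichotomy k l with h | h | h
  · exact R.C_not_fixed _ hk (hbl k h)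
  · exact R.CD_disjoint (w k) ⟨hk, h ▸ hl⟩
  · exact R.D_not_fixed _ hl (hbk l h)

lemma mem_D_map {x : S} (hx : x ∈ R.D) : R.iso.hom.toFun x ∈ R.C := by
  rw [← R.image_C] at hx
  obtain ⟨c, hc, rfl⟩ := hx
  rw [R.invol]; exact hc

lemma mem_C_map {x : S} (hx : x ∈ R.C) : R.iso.hom.toFun x ∈ R.D := by
  rw [← R.image_C]; exact ⟨x, hx, rfl⟩

lemma wordMap_liftC {m : ℕ} {w : Word S m} (h : w ∈ liftC R m) :
    wordMap R w ∈ liftD R m := by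
  obtain ⟨k, hk, hb⟩ := h
  refine ⟨k, mem_C_map R hk, fun j hj => ?_⟩
  show R.iso.hom.toFun (R.iso.hom.toFun (w j)) = R.iso.hom.toFun (w j)
  rw [hb j hj]; exact hb j hj

lemma wordMap_liftD {m : ℕ} {w : Word S m} (h : w ∈ liftD R m) :
    wordMap R w ∈ liftC R m := by
  obtain ⟨k, hk, hb⟩ := h
  refine ⟨k, mem_D_map R hk, fun j hj => ?_⟩
  show R.iso.hom.toFun (R.iso.hom.toFun (w j)) = R.iso.hom.toFun (w j)
  rw [hb j hj]; exact hb j hj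

lemma wordMap_invol {m : ℕ} (w : Word S m) : wordMap R (wordMap R w) = w :=
  funext fun i => R.invol (w i)

/- prefix lemmas -/
lemma liftC_of_init {L : ℕ} {w : Word S (L+1)} (h : Fin.init w ∈ liftC R L) :
    w ∈ liftC R (L+1) := by
  obtain ⟨k, hk, hb⟩ := h
  refine ⟨Fin.castSucc k, hk, fun j hj => ?_⟩
  have hjk : (j : ℕ) < (k : ℕ) := hj
  have hjL : (j : ℕ) < L := by have := k.isLt; omega
  have : j = Fin.castSucc ⟨j.1, hjL⟩ := by ext; rfl
  rw [this]
  exact hb ⟨j.1, hjL⟩ hj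

lemma liftD_of_init {L : ℕ} {w : Word S (L+1)} (h : Fin.init w ∈ liftD R L) :
    w ∈ liftD R (L+1) := by
  obtain ⟨k, hk, hb⟩ := h
  refine ⟨Fin.castSucc k, hk, fun j hj => ?_⟩
  have hjk : (j : ℕ) < (k : ℕ) := hj
  have hjL : (j : ℕ) < L := by have := k.isLt; omega
  have : j = Fin.castSucc ⟨j.1, hjL⟩ := by ext; rfl
  rw [this]
  exact hb ⟨j.1, hjL⟩ hj

lemma fix_below_of_initfix {L : ℕ} {w : Word S (L+1)}
    (h : wordMap R (Fin.init w) = Fin.init w) (j : Fin (L+1)) (hj : j < Fin.last L) :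
    R.iso.hom.toFun (w j) = w j := by
  have hjL : (j : ℕ) < L := hj
  have hje : j = Fin.castSucc ⟨j.1, hjL⟩ := by ext; rfl
  rw [hje]
  exact congrFun h ⟨j.1, hjL⟩

lemma liftC_of_last {L : ℕ} {w : Word S (L+1)}
    (h : wordMap R (Fin.init w) = Fin.init w) (hc : w (Fin.last L) ∈ R.C) :
    w ∈ liftC R (L+1) :=
  ⟨Fin.last L, hc, fun j hj => fix_below_of_initfix R h j hj⟩

lemma liftD_of_last {L : ℕ} {w : Word S (L+1)}
    (h : wordMap R (Fin.init w) = Fin.init w) (hd : w (Fin.last L) ∈ R.D) :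
    w ∈ liftD R (L+1) :=
  ⟨Fin.last L, hd, fun j hj => fix_below_of_initfix R h j hj⟩

lemma fix_of_init_last {L : ℕ} {w : Word S (L+1)}
    (h : wordMap R (Fin.init w) = Fin.init w)
    (hl : R.iso.hom.toFun (w (Fin.last L)) = w (Fin.last L)) :
    wordMap R w = w := by
  funext i
  rcases eq_or_lt_of_le (Nat.le_of_lt_succ i.2) with he | hlt
  · have : i = Fin.last L := by ext; exact he
    rw [this]; exact hl
  · exact fix_below_of_initfix R h i hlt

lemma single_fix {w : Word S 1} (h : R.iso.hom.toFun (w 0) = w 0) :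
    wordMap R w = w := by
  funext i
  have : i = 0 := Subsingleton.elim i 0
  rw [this]; exact h

lemma single_liftC {w : Word S 1} (h : w 0 ∈ R.C) : w ∈ liftC R 1 :=
  ⟨0, h, fun j hj => absurd hj (by simp [Fin.lt_def])⟩

lemma single_liftD {w : Word S 1} (h : w 0 ∈ R.D) : w ∈ liftD R 1 :=
  ⟨0, h, fun j hj => absurd hj (by simp [Fin.lt_def])⟩

/-- level-1 class matching a word class -/
def lmatch {L : ℕ} (x : S) (w : Word S L) : Prop :=
  (x ∈ R.C ∧ w ∈ liftC R L) ∨ (x ∈ R.D ∧ w ∈ liftD R L) ∨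
  (R.iso.hom.toFun x = x ∧ wordMap R w = w)

def Qprop {L : ℕ} (w v : Word S L) : Prop :=
  (w ∈ liftC R L ∧ v ∈ liftC R L) ∨ (w ∈ liftD R L ∧ v ∈ liftD R L) ∨
  (∃ x y, F.E x y ∧ F.typ x y = etyp F L w v ∧ lmatch R x w ∧ lmatch R y v ∧
    (wordMap R w = w ∨ wordMap R v = v))

lemma edge_class (hsep : IsSepRefl R) :
    ∀ (L : ℕ) (w v : Word S L), edge F L w v → Qprop R w v := by
  intro L
  induction L using Nat.strong_induction_on with
  | _ L ih =>
    match L with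
    | 0 => exact fun w v h => absurd h (edge_zero w v)
    | 1 =>
      intro w v h
      have hE := (edge_one w v).mp h
      have htypeq : F.typ (w 0) (v 0) = etyp F 1 w v := (etyp_one w v).symm
      rcases R.cover (w 0) with hwc | hwd | hwf <;> rcases R.cover (v 0) with hvc | hvd | hvf
      · exact Or.inl ⟨single_liftC R hwc, single_liftC R hvc⟩
      · exact absurd (Or.inl hE) (hsep _ hwc _ hvd)
      · exact Or.inr (Or.inr ⟨w 0, v 0, hE, htypeq,
          Or.inl ⟨hwc, single_liftC R hwc⟩, Or.inr (Or.inr ⟨hvf, single_fix R hvf⟩),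
          Or.inr (single_fix R hvf)⟩)
      · exact absurd (Or.inr hE) (hsep _ hvc _ hwd)
      · exact Or.inr (Or.inl ⟨single_liftD R hwd, single_liftD R hvd⟩)
      · exact Or.inr (Or.inr ⟨w 0, v 0, hE, htypeq,
          Or.inr (Or.inl ⟨hwd, single_liftD R hwd⟩), Or.inr (Or.inr ⟨hvf, single_fix R hvf⟩),
          Or.inr (single_fix R hvf)⟩)
      · exact Or.inr (Or.inr ⟨w 0, v 0, hE, htypeq,
          Or.inr (Or.inr ⟨hwf, single_fix R hwf⟩), Or.inl ⟨hvc, single_liftC R hvc⟩,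
          Or.inl (single_fix R hwf)⟩)
      · exact Or.inr (Or.inr ⟨w 0, v 0, hE, htypeq,
          Or.inr (Or.inr ⟨hwf, single_fix R hwf⟩), Or.inr (Or.inl ⟨hvd, single_liftD R hvd⟩),
          Or.inl (single_fix R hwf)⟩)
      · exact Or.inr (Or.inr ⟨w 0, v 0, hE, htypeq,
          Or.inr (Or.inr ⟨hwf, single_fix R hwf⟩), Or.inr (Or.inr ⟨hvf, single_fix R hvf⟩),
          Or.inl (single_fix R hwf)⟩)
    | (L+2) =>
      intro w v h
      rcases (edge_two L w v).mp h with ⟨hinit, hE⟩ | ⟨hedge, hglue⟩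
      · -- case 1 : same prefix
        have htypeq : F.typ (w (Fin.last (L+1))) (v (Fin.last (L+1))) = etyp F (L+2) w v := by
          rw [etyp_two, if_pos hinit]
        rcases word_cover R (Fin.init w) with hC | hD | hFix
        · exact Or.inl ⟨liftC_of_init R hC, liftC_of_init R (hinit ▸ hC)⟩
        · exact Or.inr (Or.inl ⟨liftD_of_init R hD, liftD_of_init R (hinit ▸ hD)⟩)
        · have hFix' : wordMap R (Fin.init v) = Fin.init v := hinit ▸ hFix
          rcases R.cover (w (Fin.last (L+1))) with hwc | hwd | hwf <;>
            rcases R.cover (v (Fin.last (L+1))) with hvc | hvd | hvf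
          · exact Or.inl ⟨liftC_of_last R hFix hwc, liftC_of_last R hFix' hvc⟩
          · exact absurd (Or.inl hE) (hsep _ hwc _ hvd)
          · exact Or.inr (Or.inr ⟨_, _, hE, htypeq,
              Or.inl ⟨hwc, liftC_of_last R hFix hwc⟩,
              Or.inr (Or.inr ⟨hvf, fix_of_init_last R hFix' hvf⟩),
              Or.inr (fix_of_init_last R hFix' hvf)⟩)
          · exact absurd (Or.inr hE) (hsep _ hvc _ hwd)
          · exact Or.inr (Or.inl ⟨liftD_of_last R hFix hwd, liftD_of_last R hFix' hvd⟩)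
          · exact Or.inr (Or.inr ⟨_, _, hE, htypeq,
              Or.inr (Or.inl ⟨hwd, liftD_of_last R hFix hwd⟩),
              Or.inr (Or.inr ⟨hvf, fix_of_init_last R hFix' hvf⟩),
              Or.inr (fix_of_init_last R hFix' hvf)⟩)
          · exact Or.inr (Or.inr ⟨_, _, hE, htypeq,
              Or.inr (Or.inr ⟨hwf, fix_of_init_last R hFix hwf⟩),
              Or.inl ⟨hvc, liftC_of_last R hFix' hvc⟩,
              Or.inl (fix_of_init_last R hFix hwf)⟩)
          · exact Or.inr (Or.inr ⟨_, _, hE, htypeq,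
              Or.inr (Or.inr ⟨hwf, fix_of_init_last R hFix hwf⟩),
              Or.inr (Or.inl ⟨hvd, liftD_of_last R hFix' hvd⟩),
              Or.inl (fix_of_init_last R hFix hwf)⟩)
          · exact Or.inr (Or.inr ⟨_, _, hE, htypeq,
              Or.inr (Or.inr ⟨hwf, fix_of_init_last R hFix hwf⟩),
              Or.inr (Or.inr ⟨hvf, fix_of_init_last R hFix' hvf⟩),
              Or.inl (fix_of_init_last R hFix hwf)⟩)
      · -- case 2: prefixes form an edge
        have hne : Fin.init w ≠ Fin.init v := edge_ne (L+1) _ _ hedge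
        have htyp : etyp F (L+2) w v = etyp F (L+1) (Fin.init w) (Fin.init v) := by
          rw [etyp_two, if_neg hne]
        rcases ih (L+1) (by omega) _ _ hedge with ⟨huC, hu'C⟩ | ⟨huD, hu'D⟩ |
          ⟨x, y, hxy, htypxy, hmx, hmy, hfix1⟩
        · exact Or.inl ⟨liftC_of_init R huC, liftC_of_init R hu'C⟩
        · exact Or.inr (Or.inl ⟨liftD_of_init R huD, liftD_of_init R hu'D⟩)
        · have hglue' : F.glue (F.typ x y) (w (Fin.last (L+1))) (v (Fin.last (L+1))) := by
            rw [htypxy]; exact hglue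
          have htypeq : F.typ x y = etyp F (L+2) w v := by rw [htyp, htypxy]
          rcases hmx with ⟨hxC, huC⟩ | ⟨hxD, huD⟩ | ⟨hxf, huf⟩ <;>
            rcases hmy with ⟨hyC, hu'C⟩ | ⟨hyD, hu'D⟩ | ⟨hyf, hu'f⟩
          · exact absurd hfix1 (by
              rintro (hf | hf)
              exacts [liftC_not_fix R huC hf, liftC_not_fix R hu'C hf])
          · exact absurd hfix1 (by
              rintro (hf | hf)
              exacts [liftC_not_fix R huC hf, liftD_not_fix R hu'D hf])
          · -- x ∈ C, y fixed : D2
            have hsub := (R.D2 x y hxy hyf).1 hxC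
            have hb : v (Fin.last (L+1)) ∈ Iminus F (F.typ x y) := ⟨_, hglue'⟩
            rcases hsub hb with hvC | hvfix
            · exact Or.inl ⟨liftC_of_init R huC, liftC_of_last R hu'f hvC⟩
            · have hvfixw := fix_of_init_last R hu'f hvfix
              exact Or.inr (Or.inr ⟨x, y, hxy, htypeq,
                Or.inl ⟨hxC, liftC_of_init R huC⟩,
                Or.inr (Or.inr ⟨hyf, hvfixw⟩), Or.inr hvfixw⟩)
          · exact absurd hfix1 (by
              rintro (hf | hf)
              exacts [liftD_not_fix R huD hf, liftC_not_fix R hu'C hf])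
          · exact absurd hfix1 (by
              rintro (hf | hf)
              exacts [liftD_not_fix R huD hf, liftD_not_fix R hu'D hf])
          · -- x ∈ D, y fixed : D2.2
            have hsub := (R.D2 x y hxy hyf).2 hxD
            have hb : v (Fin.last (L+1)) ∈ Iminus F (F.typ x y) := ⟨_, hglue'⟩
            rcases hsub hb with hvD | hvfix
            · exact Or.inr (Or.inl ⟨liftD_of_init R huD, liftD_of_last R hu'f hvD⟩)
            · have hvfixw := fix_of_init_last R hu'f hvfix
              exact Or.inr (Or.inr ⟨x, y, hxy, htypeq,
                Or.inr (Or.inl ⟨hxD, liftD_of_init R huD⟩),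
                Or.inr (Or.inr ⟨hyf, hvfixw⟩), Or.inr hvfixw⟩)
          · -- x fixed, y ∈ C : D3
            have hsub := (R.D3 x y hxy hxf).1 hyC
            have ha : w (Fin.last (L+1)) ∈ Iplus F (F.typ x y) := ⟨_, hglue'⟩
            rcases hsub ha with hwC | hwfix
            · exact Or.inl ⟨liftC_of_last R huf hwC, liftC_of_init R hu'C⟩
            · have hwfixw := fix_of_init_last R huf hwfix
              exact Or.inr (Or.inr ⟨x, y, hxy, htypeq,
                Or.inr (Or.inr ⟨hxf, hwfixw⟩),
                Or.inl ⟨hyC, liftC_of_init R hu'C⟩, Or.inl hwfixw⟩)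
          · -- x fixed, y ∈ D : D3.2
            have hsub := (R.D3 x y hxy hxf).2 hyD
            have ha : w (Fin.last (L+1)) ∈ Iplus F (F.typ x y) := ⟨_, hglue'⟩
            rcases hsub ha with hwD | hwfix
            · exact Or.inr (Or.inl ⟨liftD_of_last R huf hwD, liftD_of_init R hu'D⟩)
            · have hwfixw := fix_of_init_last R huf hwfix
              exact Or.inr (Or.inr ⟨x, y, hxy, htypeq,
                Or.inr (Or.inr ⟨hxf, hwfixw⟩),
                Or.inr (Or.inl ⟨hyD, liftD_of_init R hu'D⟩), Or.inl hwfixw⟩)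
          · -- both fixed : D4
            rcases R.D4 x y hxy hxf hyf _ _ hglue' with ⟨haC, hbC⟩ | ⟨haD, hbD⟩ | ⟨haf, hbf⟩
            · exact Or.inl ⟨liftC_of_last R huf haC, liftC_of_last R hu'f hbC⟩
            · exact Or.inr (Or.inl ⟨liftD_of_last R huf haD, liftD_of_last R hu'f hbD⟩)
            · have hwfixw := fix_of_init_last R huf haf
              have hvfixw := fix_of_init_last R hu'f hbf
              exact Or.inr (Or.inr ⟨x, y, hxy, htypeq,
                Or.inr (Or.inr ⟨hxf, hwfixw⟩), Or.inr (Or.inr ⟨hyf, hvfixw⟩),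
                Or.inl hwfixw⟩)

lemma adj_not_CD (hsep : IsSepRefl R) {m : ℕ} {w v : Word S m} (h : adjW F m w v)
    (hwC : w ∈ liftC R m) (hvD : v ∈ liftD R m) : False := by
  rcases h with he | he
  · rcases edge_class R hsep m w v he with ⟨_, hvC⟩ | ⟨hwD, _⟩ | ⟨x, y, _, _, _, _, hfix⟩
    · exact liftC_liftD_disj R hvC hvD
    · exact liftC_liftD_disj R hwC hwD
    · rcases hfix with hf | hf
      exacts [liftC_not_fix R hwC hf, liftD_not_fix R hvD hf]
  · rcases edge_class R hsep m v w he with ⟨hvC, _⟩ | ⟨_, hwD⟩ | ⟨x, y, _, _, _, _, hfix⟩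
    · exact liftC_liftD_disj R hvC hvD
    · exact liftC_liftD_disj R hwC hwD
    · rcases hfix with hf | hf
      exacts [liftD_not_fix R hvD hf, liftC_not_fix R hwC hf]

end IGSP

namespace IGSP
variable {S T : Type} [Nonempty T] {F : System S T} {m : ℕ}

/-- the `C ∪ 𝒱` trigger predicate of `Talpha` -/
def TrigV (R : ReflData F) (L₁ L₂' : Set (Word S m)) (x : TildeV F m) : Prop :=
  (∃ w, x = Sum.inl w ∧ w ∈ liftC R m) ∨
  (∃ pr : AddedV F m, x = Sum.inr pr ∧ (pr.1.1 = L₁ ∨ pr.1.1 = L₂'))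

/-- the `Δ` predicate of `Talpha` -/
def FixVP (R : ReflData F) (x : TildeV F m) : Prop :=
  ∃ w, x = Sum.inl w ∧ wordMap R w = w

open Classical in
lemma Talpha_def (R : ReflData F) (L₁ L₂' : Set (Word S m)) (A : TildeV F m ≃ TildeV F m)
    (Φ : TildeV F m → TildeV F m → ℝ) (x y : TildeV F m) :
    Talpha R L₁ L₂' A Φ x y =
      if FixVP R x ∧ FixVP R y then Φ x y
      else if TrigV R L₁ L₂' x ∨ TrigV R L₁ L₂' y then Φ x y + Φ (A.symm x) (A.symm y)
      else 0 := by
  unfold Talpha TrigV FixVP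
  split_ifs <;> rfl

lemma trig_not_fixpair {R : ReflData F} {L₁ L₂' : Set (Word S m)} {x y : TildeV F m}
    (h : TrigV R L₁ L₂' x ∨ TrigV R L₁ L₂' y) : ¬ (FixVP R x ∧ FixVP R y) := by
  rintro ⟨⟨w, rfl, hw⟩, ⟨v, rfl, hv⟩⟩
  rcases h with (⟨w', hw', hC⟩ | ⟨pr, hpr, -⟩) | (⟨v', hv', hC⟩ | ⟨pr, hpr, -⟩)
  · cases hw'; exact liftC_not_fix R hC hw
  · exact absurd hpr (by simp)
  · cases hv'; exact liftC_not_fix R hC hv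
  · exact absurd hpr (by simp)

lemma Talpha_val_trig {R : ReflData F} {L₁ L₂' : Set (Word S m)} {A : TildeV F m ≃ TildeV F m}
    {Φ : TildeV F m → TildeV F m → ℝ} {x y : TildeV F m}
    (h : TrigV R L₁ L₂' x ∨ TrigV R L₁ L₂' y) :
    Talpha R L₁ L₂' A Φ x y = Φ x y + Φ (A.symm x) (A.symm y) := by
  rw [Talpha_def, if_neg (trig_not_fixpair h), if_pos h]

lemma Talpha_val_fix {R : ReflData F} {L₁ L₂' : Set (Word S m)} {A : TildeV F m ≃ TildeV F m}
    {Φ : TildeV F m → TildeV F m → ℝ} {x y : TildeV F m}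
    (h1 : FixVP R x) (h2 : FixVP R y) :
    Talpha R L₁ L₂' A Φ x y = Φ x y := by
  rw [Talpha_def, if_pos ⟨h1, h2⟩]

lemma Talpha_val_zero {R : ReflData F} {L₁ L₂' : Set (Word S m)} {A : TildeV F m ≃ TildeV F m}
    {Φ : TildeV F m → TildeV F m → ℝ} {x y : TildeV F m}
    (h1 : ¬ TrigV R L₁ L₂' x) (h2 : ¬ TrigV R L₁ L₂' y) (h3 : ¬ (FixVP R x ∧ FixVP R y)) :
    Talpha R L₁ L₂' A Φ x y = 0 := by
  rw [Talpha_def, if_neg h3, if_neg (by rintro (h | h); exacts [h1 h, h2 h])]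

lemma Talpha_antisym {R : ReflData F} {L₁ L₂' : Set (Word S m)} {A : TildeV F m ≃ TildeV F m}
    {Φ : TildeV F m → TildeV F m → ℝ} (hΦ : ∀ x y, Φ x y = - Φ y x) (x y : TildeV F m) :
    Talpha R L₁ L₂' A Φ x y = - Talpha R L₁ L₂' A Φ y x := by
  rw [Talpha_def, Talpha_def]
  by_cases h1 : FixVP R x ∧ FixVP R y
  · rw [if_pos h1, if_pos ⟨h1.2, h1.1⟩]; exact hΦ x y
  · rw [if_neg h1, if_neg (fun h : FixVP R y ∧ FixVP R x => h1 ⟨h.2, h.1⟩)]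
    by_cases h2 : TrigV R L₁ L₂' x ∨ TrigV R L₁ L₂' y
    · rw [if_pos h2, if_pos (Or.symm h2), hΦ x y, hΦ (A.symm x) (A.symm y)]; ring
    · rw [if_neg h2, if_neg (fun h => h2 (Or.symm h)), neg_zero]

end IGSP

namespace IGSP

lemma myadd_rpow (a b p : ℝ) (ha : 0 ≤ a) (hb : 0 ≤ b) (hp : 1 ≤ p) :
    (a+b)^p ≤ 2^(p-1)*(a^p+b^p) := by
  have h := NNReal.rpow_add_le_mul_rpow_add_rpow a.toNNReal b.toNNReal hp
  have h' := NNReal.coe_le_coe.2 h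
  push_cast at h'
  rwa [Real.coe_toNNReal _ ha, Real.coe_toNNReal _ hb] at h'

theorem statement16' {S T : Type} [Fintype S] [Nonempty T] (F : System S T) (hGR : GR F)
    (p q : ℝ) (hp : 1 < p) (hq : q = p / (p - 1)) (m : ℕ) (hm : 1 ≤ m)
    (L₁ L₂ : Set (Word S m)) (hL₁ : L₁ ∈ scriptL F m) (hL₂ : L₂ ∈ scriptL F m)
    (hne : L₁ ≠ L₂)
    (Φ : TildeV F m → TildeV F m → ℝ)
    (hflow : IsFlow (tildeG F m) (tildeSet F m L₁) (tildeSet F m L₂) Φ)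
    (hunit : totalFlow (tildeSet F m L₁) Φ = 1)
    (hFB2 : ∀ pr : AddedV F m, pr.1.1 ≠ L₁ → pr.1.1 ≠ L₂ →
      Φ (Sum.inr pr) (Sum.inl pr.1.2) = 0)
    (R : ReflData F) (hsep : IsSepRefl R)
    (himgL₁ : (fun w : Word S m => wordMap R w) '' L₁ ∈ scriptL F m)
    (himgL₂ : (fun w : Word S m => wordMap R w) '' L₂ ∈ scriptL F m)
    (hdisj₁ : (fun w : Word S m => wordMap R w) '' L₁ ≠ L₁)
    (hdisj₂ : (fun w : Word S m => wordMap R w) '' L₁ ≠ L₂)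
    (hdisj₃ : (fun w : Word S m => wordMap R w) '' L₂ ≠ L₁)
    (hdisj₄ : (fun w : Word S m => wordMap R w) '' L₂ ≠ L₂)
    (hsubC : L₁ ∪ (fun w : Word S m => wordMap R w) '' L₂ ⊆
      liftC R m ∪ {w | wordMap R w = w})
    (hsubD : L₂ ∪ (fun w : Word S m => wordMap R w) '' L₁ ⊆
      liftD R m ∪ {w | wordMap R w = w})
    (A : TildeV F m ≃ TildeV F m)
    (hA_inl : ∀ w : Word S m, A (Sum.inl w) = Sum.inl (wordMap R w))
    (hA_inr : ∀ pr : AddedV F m, ∃ qr : AddedV F m, A (Sum.inr pr) = Sum.inr qr ∧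
      qr.1.1 = (fun w : Word S m => wordMap R w) '' pr.1.1 ∧ qr.1.2 = wordMap R pr.1.2)
    (hA_adj : ∀ x y, (tildeG F m).Adj x y ↔ (tildeG F m).Adj (A x) (A y))
    (hA_invol : ∀ x, A (A x) = x) :
    IsFlow (tildeG F m) (tildeSet F m L₁)
        (tildeSet F m ((fun w : Word S m => wordMap R w) '' L₂))
        (Talpha R L₁ ((fun w : Word S m => wordMap R w) '' L₂) A Φ) ∧
    totalFlow (tildeSet F m L₁)
        (Talpha R L₁ ((fun w : Word S m => wordMap R w) '' L₂) A Φ) = 1 ∧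
    (∀ pr : AddedV F m, pr.1.1 ≠ L₁ →
      pr.1.1 ≠ (fun w : Word S m => wordMap R w) '' L₂ →
      Talpha R L₁ ((fun w : Word S m => wordMap R w) '' L₂) A Φ
        (Sum.inr pr) (Sum.inl pr.1.2) = 0) ∧
    (∀ pr : AddedV F m, pr.1.1 = L₁ →
      Talpha R L₁ ((fun w : Word S m => wordMap R w) '' L₂) A Φ
        (Sum.inr pr) (Sum.inl pr.1.2) = Φ (Sum.inr pr) (Sum.inl pr.1.2)) ∧
    (∀ pr : AddedV F m, pr.1.1 = (fun w : Word S m => wordMap R w) '' L₂ →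
      Talpha R L₁ ((fun w : Word S m => wordMap R w) '' L₂) A Φ
        (Sum.inl pr.1.2) (Sum.inr pr) =
        Φ (A.symm (Sum.inl pr.1.2)) (A.symm (Sum.inr pr))) ∧
    energy q (Talpha R L₁ ((fun w : Word S m => wordMap R w) '' L₂) A Φ) ≤
      (2 : ℝ) ^ q * energy q Φ := by
  classical
  obtain ⟨⟨hΦa, hΦs⟩, hΦdiv⟩ := hflow
  set L₂' : Set (Word S m) := (fun w : Word S m => wordMap R w) '' L₂ with hL₂'def
  haveI : Finite (AddedV F m) := by unfold AddedV; infer_instance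
  haveI : Finite (TildeV F m) := by unfold TildeV; infer_instance
  haveI : Fintype (TildeV F m) := Fintype.ofFinite _
  -- basic facts about A
  have hAsymm : ∀ x, A.symm x = A x := by
    intro x
    have h := A.symm_apply_apply (A x)
    rwa [hA_invol x] at h
  have hAadj : ∀ x y, (tildeG F m).Adj (A x) (A y) → (tildeG F m).Adj x y := by
    intro x y h
    have h2 := (hA_adj (A x) (A y)).mp h
    rwa [hA_invol, hA_invol] at h2
  have hwm_invol : ∀ w : Word S m, wordMap R (wordMap R w) = w := wordMap_invol R
  have himg_invol : ∀ X : Set (Word S m),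
      (fun w : Word S m => wordMap R w) '' ((fun w : Word S m => wordMap R w) '' X) = X := by
    intro X
    rw [Set.image_image]
    simp only [hwm_invol, Set.image_id']
  have himg_inj : ∀ X Y : Set (Word S m),
      (fun w : Word S m => wordMap R w) '' X = (fun w : Word S m => wordMap R w) '' Y →
      X = Y := by
    intro X Y h
    have h2 := congrArg (Set.image (fun w : Word S m => wordMap R w)) h
    rwa [himg_invol, himg_invol] at h2
  have e6 : (fun w : Word S m => wordMap R w) '' L₁ ≠ L₂' := fun h => hne (himg_inj _ _ h)
  -- adjacency characterizations
  have hadj_rr : ∀ (pr : AddedV F m) (y : TildeV F m),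
      (tildeG F m).Adj (Sum.inr pr) y ↔ y = Sum.inl pr.1.2 := by
    intro pr y
    cases y with
    | inl w =>
      constructor
      · intro h
        have h2 : pr.1.2 = w := h
        rw [h2]
      · intro h
        have h2 : w = pr.1.2 := Sum.inl.inj h
        show pr.1.2 = w
        rw [h2]
    | inr qr =>
      constructor
      · intro h; exact absurd h (by simp [tildeG])
      · intro h; exact absurd h (by simp)
  -- FB2 consequences
  have hΦ_inr : ∀ (pr : AddedV F m) (y : TildeV F m), pr.1.1 ≠ L₁ → pr.1.1 ≠ L₂ →
      Φ (Sum.inr pr) y = 0 := by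
    intro pr y h1 h2
    by_cases hy : y = Sum.inl pr.1.2
    · rw [hy]; exact hFB2 pr h1 h2
    · exact hΦs _ _ (fun hadj => hy ((hadj_rr pr y).mp hadj))
  have hΦ_inr' : ∀ (pr : AddedV F m) (y : TildeV F m), pr.1.1 ≠ L₁ → pr.1.1 ≠ L₂ →
      Φ y (Sum.inr pr) = 0 := by
    intro pr y h1 h2
    erw [hΦa, hΦ_inr pr y h1 h2, neg_zero]
  -- trigger characterizations
  have htrig_inl : ∀ w : Word S m,
      TrigV R L₁ L₂' (Sum.inl w : TildeV F m) ↔ w ∈ liftC R m := by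
    intro w
    constructor
    · rintro (⟨w', h, hC⟩ | ⟨pr, h, -⟩)
      · cases Sum.inl.inj h; exact hC
      · exact absurd h (by simp)
    · intro h; exact Or.inl ⟨w, rfl, h⟩
  have htrig_inr : ∀ pr : AddedV F m,
      TrigV R L₁ L₂' (Sum.inr pr : TildeV F m) ↔ (pr.1.1 = L₁ ∨ pr.1.1 = L₂') := by
    intro pr
    constructor
    · rintro (⟨w', h, -⟩ | ⟨pr', h, hL⟩)
      · exact absurd h (by simp)
      · cases Sum.inr.inj h; exact hL
    · intro h; exact Or.inr ⟨pr, rfl, h⟩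
  have hfix_inl : ∀ w : Word S m,
      FixVP R (Sum.inl w : TildeV F m) ↔ wordMap R w = w := by
    intro w
    constructor
    · rintro ⟨w', h, hf⟩; cases Sum.inl.inj h; exact hf
    · intro h; exact ⟨w, rfl, h⟩
  have hfix_inr : ∀ pr : AddedV F m, ¬ FixVP R (Sum.inr pr : TildeV F m) := by
    rintro pr ⟨w', h, -⟩; exact absurd h (by simp)
  -- subset facts
  have hsubC' : ∀ w : Word S m, w ∈ L₁ ∨ w ∈ L₂' →
      w ∈ liftC R m ∨ wordMap R w = w := by
    intro w h
    have h2 := hsubC ((Set.mem_union _ _ _).mpr h)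
    exact (Set.mem_union _ _ _).mp h2
  have hsubD' : ∀ w : Word S m, w ∈ L₂ ∨ w ∈ (fun w : Word S m => wordMap R w) '' L₁ →
      w ∈ liftD R m ∨ wordMap R w = w := by
    intro w h
    have h2 := hsubD ((Set.mem_union _ _ _).mpr h)
    exact (Set.mem_union _ _ _).mp h2
  -- support of the twisted flow
  have hTs : ∀ x y, ¬ (tildeG F m).Adj x y → Talpha R L₁ L₂' A Φ x y = 0 := by
    intro x y hnadj
    have hnadj2 : ¬ (tildeG F m).Adj (A.symm x) (A.symm y) := by
      rw [hAsymm, hAsymm]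
      exact fun h => hnadj (hAadj _ _ h)
    rw [Talpha_def]
    split_ifs with h1 h2
    · exact hΦs x y hnadj
    · rw [hΦs x y hnadj, hΦs _ _ hnadj2, add_zero]
    · rfl
  -- finsum to finsums
  have hfd : ∀ (Ψ : TildeV F m → TildeV F m → ℝ) (x : TildeV F m),
      fdiv Ψ x = ∑ y, Ψ x y := fun Ψ x => finsum_eq_sum_of_fintype _
  have hΦdiv_inl : ∀ w : Word S m, fdiv Φ (Sum.inl w) = 0 := by
    intro w
    refine hΦdiv _ ?_
    rintro (⟨pr, -, h⟩ | ⟨pr, -, h⟩) <;> simp at h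
  -- divergence at C-words
  have hdiv_C : ∀ w : Word S m, w ∈ liftC R m →
      fdiv (Talpha R L₁ L₂' A Φ) (Sum.inl w) = 0 := by
    intro w hw
    have htx : TrigV R L₁ L₂' (Sum.inl w : TildeV F m) := (htrig_inl w).mpr hw
    erw [hfd]
    calc (∑ y, Talpha R L₁ L₂' A Φ (Sum.inl w) y)
        = ∑ y, (Φ (Sum.inl w) y + Φ (A (Sum.inl w)) (A y)) := by
          refine Finset.sum_congr rfl fun y _ => ?_
          erw [Talpha_val_trig (Or.inl htx), hAsymm, hAsymm]
      _ = (∑ y, Φ (Sum.inl w) y) + ∑ y, Φ (A (Sum.inl w)) (A y) :=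
          Finset.sum_add_distrib
      _ = fdiv Φ (Sum.inl w) + fdiv Φ (A (Sum.inl w)) := by
          erw [hfd, hfd]
          congr 1
          exact Equiv.sum_comp A (fun z => Φ (A (Sum.inl w)) z)
      _ = 0 := by
          rw [hΦdiv_inl w, hA_inl, hΦdiv_inl, add_zero]
  -- divergence at D-words
  have hdiv_D : ∀ w : Word S m, w ∈ liftD R m →
      fdiv (Talpha R L₁ L₂' A Φ) (Sum.inl w) = 0 := by
    intro w hw
    erw [hfd]
    refine Finset.sum_eq_zero fun y _ => ?_
    by_cases hadj : (tildeG F m).Adj (Sum.inl w) y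
    · have hnx : ¬ TrigV R L₁ L₂' (Sum.inl w : TildeV F m) := by
        rw [htrig_inl]
        exact fun hC => liftC_liftD_disj R hC hw
      cases y with
      | inl v =>
        have h2 : w ≠ v ∧ adjW F m w v := hadj
        have hny : ¬ TrigV R L₁ L₂' (Sum.inl v : TildeV F m) := by
          rw [htrig_inl]
          intro hC
          exact adj_not_CD R hsep (Or.symm h2.2) hC hw
        refine Talpha_val_zero hnx hny ?_
        rintro ⟨hfx, -⟩
        exact liftD_not_fix R hw ((hfix_inl w).mp hfx)
      | inr pr =>
        have hpw : pr.1.2 = w := hadj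
        have hny : ¬ TrigV R L₁ L₂' (Sum.inr pr : TildeV F m) := by
          rw [htrig_inr]
          intro hL
          have hwmem : w ∈ L₁ ∨ w ∈ L₂' := by
            rcases hL with h | h
            · exact Or.inl (by rw [← hpw, ← h]; exact pr.2.2)
            · exact Or.inr (by rw [← hpw, ← h]; exact pr.2.2)
          rcases hsubC' w hwmem with hC | hF
          · exact liftC_liftD_disj R hC hw
          · exact liftD_not_fix R hw hF
        refine Talpha_val_zero hnx hny ?_
        rintro ⟨hfx, -⟩
        exact liftD_not_fix R hw ((hfix_inl w).mp hfx)
    · exact hTs _ _ hadj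
  -- divergence at fixed words
  have hdiv_F : ∀ w : Word S m, wordMap R w = w →
      fdiv (Talpha R L₁ L₂' A Φ) (Sum.inl w) = 0 := by
    intro w hwfix
    have hAx : A (Sum.inl w) = Sum.inl w := by rw [hA_inl, hwfix]
    have hpt : ∀ y, Talpha R L₁ L₂' A Φ (Sum.inl w) y =
        ((if TrigV R L₁ L₂' y then Φ (Sum.inl w) y else 0)
          + (if TrigV R L₁ L₂' y then Φ (Sum.inl w) (A y) else 0))
        + (if FixVP R y then Φ (Sum.inl w) y else 0) := by
      intro y
      by_cases hy : TrigV R L₁ L₂' y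
      · have hnf : ¬ FixVP R y := fun hf =>
          trig_not_fixpair (Or.inr hy) ⟨⟨w, rfl, hwfix⟩, hf⟩
        erw [Talpha_val_trig (Or.inr hy), if_pos hy, if_pos hy, if_neg hnf, add_zero,
          hAsymm, hAsymm, hAx]
      · by_cases hf : FixVP R y
        · rw [Talpha_val_fix ⟨w, rfl, hwfix⟩ hf, if_neg hy, if_neg hy, if_pos hf]
          ring
        · have hnx : ¬ TrigV R L₁ L₂' (Sum.inl w : TildeV F m) := by
            rw [htrig_inl]
            exact fun hC => liftC_not_fix R hC hwfix
          rw [Talpha_val_zero hnx hy (fun h => hf h.2), if_neg hy, if_neg hy, if_neg hf]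
          ring
    have hkey : ∀ y, ((if TrigV R L₁ L₂' y then Φ (Sum.inl w) y else 0)
        + (if TrigV R L₁ L₂' (A y) then Φ (Sum.inl w) y else 0))
        + (if FixVP R y then Φ (Sum.inl w) y else 0) = Φ (Sum.inl w) y := by
      intro y
      cases y with
      | inl v =>
        rcases word_cover R v with hC | hD | hF
        · rw [if_pos ((htrig_inl v).mpr hC), if_neg, if_neg]
          · ring
          · rw [hfix_inl]; exact liftC_not_fix R hC
          · rw [hA_inl, htrig_inl]
            exact fun hC' => liftC_liftD_disj R hC' (wordMap_liftC R hC)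
        · rw [if_neg, if_pos, if_neg]
          · ring
          · rw [hfix_inl]; exact liftD_not_fix R hD
          · rw [hA_inl, htrig_inl]; exact wordMap_liftD R hD
          · rw [htrig_inl]; exact fun hC => liftC_liftD_disj R hC hD
        · rw [if_neg, if_neg, if_pos ((hfix_inl v).mpr hF)]
          · ring
          · rw [hA_inl, hF, htrig_inl]
            exact fun hC => liftC_not_fix R hC hF
          · rw [htrig_inl]; exact fun hC => liftC_not_fix R hC hF
      | inr pr =>
        obtain ⟨qr, hqe, hq1, hq2⟩ := hA_inr pr
        rw [if_neg (hfix_inr pr), add_zero, hqe]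
        by_cases h1 : pr.1.1 = L₁ ∨ pr.1.1 = L₂'
        · have h2 : ¬ (qr.1.1 = L₁ ∨ qr.1.1 = L₂') := by
            rw [hq1]
            rintro (h | h)
            · rcases h1 with h' | h'
              · rw [h'] at h; exact hdisj₁ h
              · rw [h', hL₂'def, himg_invol] at h; exact hne h.symm
            · rcases h1 with h' | h'
              · rw [h'] at h; exact e6 h
              · rw [h', hL₂'def, himg_invol] at h; exact hdisj₄ h.symm
          rw [if_pos ((htrig_inr pr).mpr h1), if_neg (fun ht => h2 ((htrig_inr qr).mp ht)),
            add_zero]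
        · by_cases h2 : qr.1.1 = L₁ ∨ qr.1.1 = L₂'
          · rw [if_neg (fun ht => h1 ((htrig_inr pr).mp ht)),
              if_pos ((htrig_inr qr).mpr h2), zero_add]
          · rw [if_neg (fun ht => h1 ((htrig_inr pr).mp ht)),
              if_neg (fun ht => h2 ((htrig_inr qr).mp ht)), add_zero]
            have hp1 : pr.1.1 ≠ L₁ := fun h => h1 (Or.inl h)
            have hp2 : pr.1.1 ≠ L₂ := by
              intro h
              apply h2
              right
              rw [hq1, h, hL₂'def]
            erw [hΦ_inr' pr _ hp1 hp2]
    erw [hfd]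
    calc (∑ y, Talpha R L₁ L₂' A Φ (Sum.inl w) y)
        = ((∑ y, if TrigV R L₁ L₂' y then Φ (Sum.inl w) y else 0)
          + (∑ y, if TrigV R L₁ L₂' y then Φ (Sum.inl w) (A y) else 0))
          + (∑ y, if FixVP R y then Φ (Sum.inl w) y else 0) := by
          rw [← Finset.sum_add_distrib, ← Finset.sum_add_distrib]
          exact Finset.sum_congr rfl fun y _ => hpt y
      _ = ((∑ y, if TrigV R L₁ L₂' y then Φ (Sum.inl w) y else 0)
          + (∑ y, if TrigV R L₁ L₂' (A y) then Φ (Sum.inl w) y else 0))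
          + (∑ y, if FixVP R y then Φ (Sum.inl w) y else 0) := by
          congr 1
          congr 1
          refine Fintype.sum_equiv A _ _ fun y => ?_
          rw [hA_invol]
      _ = ∑ y, Φ (Sum.inl w) y := by
          rw [← Finset.sum_add_distrib, ← Finset.sum_add_distrib]
          exact Finset.sum_congr rfl fun y _ => hkey y
      _ = 0 := by erw [← hfd]; exact hΦdiv_inl w
  -- values at L₁-pendants
  have hT_L1 : ∀ pr : AddedV F m, pr.1.1 = L₁ →
      Talpha R L₁ L₂' A Φ (Sum.inr pr) (Sum.inl pr.1.2) =
        Φ (Sum.inr pr) (Sum.inl pr.1.2) := by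
    intro pr hpr
    obtain ⟨qr, hqe, hq1, hq2⟩ := hA_inr pr
    erw [Talpha_val_trig (Or.inl ((htrig_inr pr).mpr (Or.inl hpr))),
      hAsymm, hAsymm, hqe, hA_inl, ← hq2]
    have hq1' : qr.1.1 ≠ L₁ := by rw [hq1, hpr]; exact hdisj₁
    have hq2' : qr.1.1 ≠ L₂ := by rw [hq1, hpr]; exact hdisj₂
    rw [hFB2 qr hq1' hq2', add_zero]
  -- pendant-only divergence
  have hfd_attach : ∀ (Ψ : TildeV F m → TildeV F m → ℝ) (pr : AddedV F m),
      (∀ y, ¬ (tildeG F m).Adj (Sum.inr pr) y → Ψ (Sum.inr pr) y = 0) →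
      fdiv Ψ (Sum.inr pr) = Ψ (Sum.inr pr) (Sum.inl pr.1.2) := by
    intro Ψ pr hz
    erw [hfd]
    refine Finset.sum_eq_single _ (fun y _ hy => hz y ?_) (fun h => absurd (Finset.mem_univ _) h)
    rw [hadj_rr]
    exact hy
  -- values at other pendants
  have hT_other : ∀ pr : AddedV F m, pr.1.1 ≠ L₁ → pr.1.1 ≠ L₂' → ∀ y,
      Talpha R L₁ L₂' A Φ (Sum.inr pr) y = 0 := by
    intro pr h1 h2 y
    by_cases hadj : (tildeG F m).Adj (Sum.inr pr) y
    · have hy : y = Sum.inl pr.1.2 := (hadj_rr pr y).mp hadj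
      subst hy
      have hnx : ¬ TrigV R L₁ L₂' (Sum.inr pr : TildeV F m) := by
        rw [htrig_inr]; rintro (h | h); exacts [h1 h, h2 h]
      by_cases hC : pr.1.2 ∈ liftC R m
      · erw [Talpha_val_trig (Or.inr ((htrig_inl _).mpr hC))]
        have hp2 : pr.1.1 ≠ L₂ := by
          intro h
          have hmem : pr.1.2 ∈ L₂ := by rw [← h]; exact pr.2.2
          rcases hsubD' _ (Or.inl hmem) with hD | hF
          exacts [liftC_liftD_disj R hC hD, liftC_not_fix R hC hF]
        obtain ⟨qr, hqe, hq1, hq2⟩ := hA_inr pr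
        erw [hAsymm, hAsymm, hqe, hA_inl, ← hq2]
        have hq1' : qr.1.1 ≠ L₁ := by
          rw [hq1]
          intro h
          have hpr1 : pr.1.1 = (fun w : Word S m => wordMap R w) '' L₁ := by
            rw [← himg_invol pr.1.1, h]
          have hmem : pr.1.2 ∈ (fun w : Word S m => wordMap R w) '' L₁ := by
            rw [← hpr1]; exact pr.2.2
          rcases hsubD' _ (Or.inr hmem) with hD | hF
          exacts [liftC_liftD_disj R hC hD, liftC_not_fix R hC hF]
        have hq2' : qr.1.1 ≠ L₂ := by
          rw [hq1]
          intro h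
          apply h2
          rw [← himg_invol pr.1.1, h, hL₂'def]
        rw [hFB2 pr h1 hp2, hFB2 qr hq1' hq2', add_zero]
      · refine Talpha_val_zero hnx ?_ ?_
        · rw [htrig_inl]; exact hC
        · rintro ⟨hfx, -⟩; exact hfix_inr pr hfx
    · exact hTs _ _ hadj
  have hdiv_other : ∀ pr : AddedV F m, pr.1.1 ≠ L₁ → pr.1.1 ≠ L₂' →
      fdiv (Talpha R L₁ L₂' A Φ) (Sum.inr pr) = 0 := by
    intro pr h1 h2
    erw [hfd]
    exact Finset.sum_eq_zero fun y _ => hT_other pr h1 h2 y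
  -- divergence preserved at L₁-pendants
  have hdiv_L1 : ∀ pr : AddedV F m, pr.1.1 = L₁ →
      fdiv (Talpha R L₁ L₂' A Φ) (Sum.inr pr) = fdiv Φ (Sum.inr pr) := by
    intro pr hpr
    rw [hfd_attach _ pr (fun y h => hTs _ y h), hfd_attach Φ pr (fun y h => hΦs _ y h),
      hT_L1 pr hpr]
  -- claim 5
  have hclaim5 : ∀ pr : AddedV F m, pr.1.1 = L₂' →
      Talpha R L₁ L₂' A Φ (Sum.inl pr.1.2) (Sum.inr pr) =
        Φ (A.symm (Sum.inl pr.1.2)) (A.symm (Sum.inr pr)) := by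
    intro pr hpr
    erw [Talpha_val_trig (Or.inr ((htrig_inr pr).mpr (Or.inr hpr)))]
    have h1 : pr.1.1 ≠ L₁ := by rw [hpr]; exact hdisj₃
    have h2 : pr.1.1 ≠ L₂ := by rw [hpr]; exact hdisj₄
    erw [hΦ_inr' pr _ h1 h2, zero_add]
  -- energy facts
  have hq1 : 1 ≤ q := by
    rw [hq, le_div_iff₀ (by linarith)]
    linarith
  have hq0 : q ≠ 0 := by linarith
  refine ⟨⟨⟨fun x y => Talpha_antisym hΦa x y, hTs⟩, ?_⟩, ?_, ?_, hT_L1, hclaim5, ?_⟩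
  · -- flow region
    intro x hx
    cases x with
    | inl w =>
      rcases word_cover R w with hC | hD | hF
      exacts [hdiv_C w hC, hdiv_D w hD, hdiv_F w hF]
    | inr pr =>
      have h1 : pr.1.1 ≠ L₁ := fun h => hx (Set.mem_union_left _ ⟨pr, h, rfl⟩)
      have h2 : pr.1.1 ≠ L₂' := fun h => hx (Set.mem_union_right _ ⟨pr, h, rfl⟩)
      exact hdiv_other pr h1 h2
  · -- total flow
    have hcong : totalFlow (tildeSet F m L₁) (Talpha R L₁ L₂' A Φ) =
        totalFlow (tildeSet F m L₁) Φ := by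
      refine finsum_mem_congr rfl (fun x hx => ?_)
      obtain ⟨pr, hpr, rfl⟩ := hx
      exact hdiv_L1 pr hpr
    rw [hcong, hunit]
  · -- FB2
    intro pr h1 h2
    exact hT_other pr h1 h2 (Sum.inl pr.1.2)
  · -- energy
    have hpb : ∀ x y, |Talpha R L₁ L₂' A Φ x y| ^ q ≤
        (2:ℝ)^(q-1) * (|Φ x y|^q + |Φ (A.symm x) (A.symm y)|^q) := by
      intro x y
      have hnn : (0:ℝ) ≤ |Φ (A.symm x) (A.symm y)|^q := Real.rpow_nonneg (abs_nonneg _) _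
      have hnn2 : (0:ℝ) ≤ |Φ x y|^q := Real.rpow_nonneg (abs_nonneg _) _
      have h21 : (1:ℝ) ≤ 2^(q-1) := by
        calc (1:ℝ) = 2^(0:ℝ) := by rw [Real.rpow_zero]
          _ ≤ 2^(q-1) := Real.rpow_le_rpow_of_exponent_le (by norm_num) (by linarith)
      have h20 : (0:ℝ) ≤ 2^(q-1) := by positivity
      rw [Talpha_def]
      split_ifs with h1 h2
      · calc |Φ x y|^q ≤ 2^(q-1) * |Φ x y|^q := le_mul_of_one_le_left hnn2 h21
          _ ≤ 2^(q-1) * (|Φ x y|^q + |Φ (A.symm x) (A.symm y)|^q) := by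
              apply mul_le_mul_of_nonneg_left _ h20
              linarith
      · calc |Φ x y + Φ (A.symm x) (A.symm y)|^q
            ≤ (|Φ x y| + |Φ (A.symm x) (A.symm y)|)^q :=
              Real.rpow_le_rpow (abs_nonneg _) (abs_add_le _ _) (by linarith)
          _ ≤ 2^(q-1) * (|Φ x y|^q + |Φ (A.symm x) (A.symm y)|^q) :=
              myadd_rpow _ _ q (abs_nonneg _) (abs_nonneg _) hq1
      · rw [abs_zero, Real.zero_rpow hq0]
        positivity
    have hEq : ∀ Ψ : TildeV F m → TildeV F m → ℝ,
        energy q Ψ = (∑ x, ∑ y, |Ψ x y| ^ q)/2 := by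
      intro Ψ
      unfold energy
      congr 1
      rw [finsum_eq_sum_of_fintype]
      exact Finset.sum_congr rfl fun x _ => finsum_eq_sum_of_fintype _
    have step2 : (∑ x, ∑ y, |Φ (A.symm x) (A.symm y)|^q) = ∑ x, ∑ y, |Φ x y|^q := by
      calc (∑ x, ∑ y, |Φ (A.symm x) (A.symm y)|^q)
          = ∑ x, ∑ y, |Φ (A.symm x) y|^q := by
            refine Finset.sum_congr rfl fun x _ => ?_
            exact Equiv.sum_comp A.symm (fun z => |Φ (A.symm x) z|^q)
        _ = ∑ x, ∑ y, |Φ x y|^q :=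
            Equiv.sum_comp A.symm (fun z => ∑ y, |Φ z y|^q)
    have hsum : (∑ x, ∑ y, |Talpha R L₁ L₂' A Φ x y|^q) ≤
        (2:ℝ)^(q-1) * ((∑ x, ∑ y, |Φ x y|^q) + (∑ x, ∑ y, |Φ x y|^q)) := by
      calc (∑ x, ∑ y, |Talpha R L₁ L₂' A Φ x y|^q)
          ≤ ∑ x, ∑ y, (2:ℝ)^(q-1) * (|Φ x y|^q + |Φ (A.symm x) (A.symm y)|^q) :=
            Finset.sum_le_sum fun x _ => Finset.sum_le_sum fun y _ => hpb x y
        _ = (2:ℝ)^(q-1) * ((∑ x, ∑ y, |Φ x y|^q) + (∑ x, ∑ y, |Φ (A.symm x) (A.symm y)|^q)) := by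
            simp only [mul_add, Finset.sum_add_distrib, ← Finset.mul_sum]
        _ = (2:ℝ)^(q-1) * ((∑ x, ∑ y, |Φ x y|^q) + (∑ x, ∑ y, |Φ x y|^q)) := by rw [step2]
    rw [hEq, hEq]
    have h2q : (2:ℝ)^q = 2^(q-1) * 2 := by
      rw [← Real.rpow_add_one (by norm_num : (2:ℝ) ≠ 0) (q-1)]
      norm_num
    have hx1 : (2:ℝ)^(q-1) * ((∑ x, ∑ y, |Φ x y|^q) + (∑ x, ∑ y, |Φ x y|^q)) =
        2 * ((2:ℝ)^(q-1) * (∑ x, ∑ y, |Φ x y|^q)) := by ring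
    have hx2 : (2:ℝ)^q * ((∑ x, ∑ y, |Φ x y|^q)/2) =
        (2:ℝ)^(q-1) * (∑ x, ∑ y, |Φ x y|^q) := by rw [h2q]; ring
    linarith

end IGSP

namespace IGSP

/-- Twisting a flow by a separative reflection symmetry: if `Φ` is a
unit flow from `L̃₁` to `L̃₂` in `G̃_m` satisfying (FB2), and `α` is a separative
reflection symmetry with `{L₁,L₂} ∩ {α(L₁),α(L₂)} = ∅`,
`L₁ ∪ α(L₂) ⊆ C_α^{(m)} ∪ (Δ_α)^m` and `L₂ ∪ α(L₁) ⊆ D_α^{(m)} ∪ (Δ_α)^m`, then the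
twisted flow `T_α(Φ)` is a unit flow from `L̃₁` to the added vertices of `α(L₂)`
satisfying (FB2), compatible with `Φ` and `α(Φ)` at the boundary, and
`E_q(T_α(Φ)) ≤ 2^q E_q(Φ)`. -/
theorem statement16 {S T : Type} [Fintype S] [Nonempty T] (F : System S T) (hGR : GR F)
    (p q : ℝ) (hp : 1 < p) (hq : q = p / (p - 1)) (m : ℕ) (hm : 1 ≤ m)
    (L₁ L₂ : Set (Word S m)) (hL₁ : L₁ ∈ scriptL F m) (hL₂ : L₂ ∈ scriptL F m)
    (hne : L₁ ≠ L₂)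
    (Φ : TildeV F m → TildeV F m → ℝ)
    (hflow : IsFlow (tildeG F m) (tildeSet F m L₁) (tildeSet F m L₂) Φ)
    (hunit : totalFlow (tildeSet F m L₁) Φ = 1)
    (hFB2 : ∀ pr : AddedV F m, pr.1.1 ≠ L₁ → pr.1.1 ≠ L₂ →
      Φ (Sum.inr pr) (Sum.inl pr.1.2) = 0)
    (R : ReflData F) (hsep : IsSepRefl R)
    (himgL₁ : (fun w : Word S m => wordMap R w) '' L₁ ∈ scriptL F m)
    (himgL₂ : (fun w : Word S m => wordMap R w) '' L₂ ∈ scriptL F m)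
    (hdisj₁ : (fun w : Word S m => wordMap R w) '' L₁ ≠ L₁)
    (hdisj₂ : (fun w : Word S m => wordMap R w) '' L₁ ≠ L₂)
    (hdisj₃ : (fun w : Word S m => wordMap R w) '' L₂ ≠ L₁)
    (hdisj₄ : (fun w : Word S m => wordMap R w) '' L₂ ≠ L₂)
    (hsubC : L₁ ∪ (fun w : Word S m => wordMap R w) '' L₂ ⊆
      liftC R m ∪ {w | wordMap R w = w})
    (hsubD : L₂ ∪ (fun w : Word S m => wordMap R w) '' L₁ ⊆
      liftD R m ∪ {w | wordMap R w = w})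
    (A : TildeV F m ≃ TildeV F m)
    (hA_inl : ∀ w : Word S m, A (Sum.inl w) = Sum.inl (wordMap R w))
    (hA_inr : ∀ pr : AddedV F m, ∃ qr : AddedV F m, A (Sum.inr pr) = Sum.inr qr ∧
      qr.1.1 = (fun w : Word S m => wordMap R w) '' pr.1.1 ∧ qr.1.2 = wordMap R pr.1.2)
    (hA_adj : ∀ x y, (tildeG F m).Adj x y ↔ (tildeG F m).Adj (A x) (A y))
    (hA_invol : ∀ x, A (A x) = x) :
    IsFlow (tildeG F m) (tildeSet F m L₁)
        (tildeSet F m ((fun w : Word S m => wordMap R w) '' L₂))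
        (Talpha R L₁ ((fun w : Word S m => wordMap R w) '' L₂) A Φ) ∧
    totalFlow (tildeSet F m L₁)
        (Talpha R L₁ ((fun w : Word S m => wordMap R w) '' L₂) A Φ) = 1 ∧
    (∀ pr : AddedV F m, pr.1.1 ≠ L₁ →
      pr.1.1 ≠ (fun w : Word S m => wordMap R w) '' L₂ →
      Talpha R L₁ ((fun w : Word S m => wordMap R w) '' L₂) A Φ
        (Sum.inr pr) (Sum.inl pr.1.2) = 0) ∧
    (∀ pr : AddedV F m, pr.1.1 = L₁ →
      Talpha R L₁ ((fun w : Word S m => wordMap R w) '' L₂) A Φ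
        (Sum.inr pr) (Sum.inl pr.1.2) = Φ (Sum.inr pr) (Sum.inl pr.1.2)) ∧
    (∀ pr : AddedV F m, pr.1.1 = (fun w : Word S m => wordMap R w) '' L₂ →
      Talpha R L₁ ((fun w : Word S m => wordMap R w) '' L₂) A Φ
        (Sum.inl pr.1.2) (Sum.inr pr) =
        Φ (A.symm (Sum.inl pr.1.2)) (A.symm (Sum.inr pr))) ∧
    energy q (Talpha R L₁ ((fun w : Word S m => wordMap R w) '' L₂) A Φ) ≤
      (2 : ℝ) ^ q * energy q Φ := by
  exact statement16' F hGR p q hp hq m hm L₁ L₂ hL₁ hL₂ hne Φ hflow hunit hFB2 R hsep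
    himgL₁ himgL₂ hdisj₁ hdisj₂ hdisj₃ hdisj₄ hsubC hsubD A hA_inl hA_inr hA_adj hA_invol

end IGSP
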